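/- Let p be a prime and define I_p(n) = (p^n - 1)/(p - 1) for n ≥ 1 and the rational polynomials G̃_{p,0}(x) = x and G̃_{p,n}(x) = (1/p)·∏_{i=0}^{p-1}(G̃_{p,n-1}(x) - i). Then p^{I_p(n)}·G̃_{p,n}(x) is an integer polynomial with integer values, and it is a null polynomial modulo p^{I_p(n)}: for every integer x, G̃_{p,n}(x) is an integer. -/

import Mathlib

open Polynomial

noncomputable def Gt (p : ℕ) : ℕ → Polynomial ℚ
  | 0 => X
  | n + 1 => C (1 / (p : ℚ)) * ∏ i ∈ Finset.range p, (Gt p n - C (i : ℚ))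

def Ip (p n : ℕ) : ℕ := ∑ i ∈ Finset.range n, p ^ i

lemma Ip_succ (p n : ℕ) : Ip p (n + 1) = Ip p n * p + 1 := by
  simp only [Ip, Finset.sum_range_succ', pow_succ, pow_zero, ← Finset.sum_mul]

lemma Gt_eval_int (p : ℕ) (hp : p.Prime) :
    ∀ n (x : ℤ), ∃ a : ℤ, (Gt p n).eval (x : ℚ) = (a : ℚ) := by
  intro n
  induction n with
  | zero => intro x; exact ⟨x, by simp [Gt]⟩
  | succ n ih =>
    intro x
    obtain ⟨a, ha⟩ := ih x
    have hp0 : (p : ℚ) ≠ 0 := by exact_mod_cast hp.pos.ne'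
    -- the integer product
    have hprod : (Gt p (n + 1)).eval (x : ℚ)
        = (1 / (p : ℚ)) * ((∏ i ∈ Finset.range p, (a - (i : ℤ)) : ℤ) : ℚ) := by
      simp only [Gt, eval_mul, eval_C, eval_prod, eval_sub, ha]
      push_cast
      ring
    -- p divides the product
    have h0 : (0 : ℤ) ≤ a % p := Int.emod_nonneg a (by exact_mod_cast hp.pos.ne')
    have hi0 : (a % (p : ℤ)).toNat ∈ Finset.range p := by
      rw [Finset.mem_range]
      have h1 : a % (p : ℤ) < p := Int.emod_lt_of_pos a (by exact_mod_cast hp.pos)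
      omega
    have hdvd : (p : ℤ) ∣ ∏ i ∈ Finset.range p, (a - (i : ℤ)) := by
      refine dvd_trans ?_ (Finset.dvd_prod_of_mem _ hi0)
      have : a - ((a % (p : ℤ)).toNat : ℤ) = a - a % p := by omega
      rw [this]
      exact Int.dvd_self_sub_of_emod_eq rfl
    obtain ⟨b, hb⟩ := hdvd
    refine ⟨b, ?_⟩
    rw [hprod, hb]
    push_cast
    field_simp

lemma Gt_coeff_int (p : ℕ) (hp : p.Prime) :
    ∀ n, ∃ q : Polynomial ℤ, C ((p : ℚ) ^ (Ip p n)) * Gt p n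
      = q.map (Int.castRingHom ℚ) := by
  intro n
  induction n with
  | zero => exact ⟨X, by simp [Gt, Ip]⟩
  | succ n ih =>
    obtain ⟨q, hq⟩ := ih
    have hp0 : (p : ℚ) ≠ 0 := by exact_mod_cast hp.pos.ne'
    refine ⟨∏ i ∈ Finset.range p, (q - C ((p : ℤ) ^ (Ip p n) * i)), ?_⟩
    rw [Ip_succ]
    have key : C ((p : ℚ) ^ (Ip p n * p + 1)) * Gt p (n + 1)
        = ∏ i ∈ Finset.range p, (C ((p : ℚ) ^ (Ip p n)) * (Gt p n - C (i : ℚ))) := by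
      rw [Finset.prod_mul_distrib, Finset.prod_const, Finset.card_range]
      simp only [Gt]
      rw [← mul_assoc, ← C_mul, ← C_pow]
      congr 2
      field_simp
      rw [← pow_mul, pow_succ']
    rw [key, Polynomial.map_prod]
    refine Finset.prod_congr rfl fun i _ => ?_
    rw [mul_sub, hq, ← C_mul, Polynomial.map_sub, Polynomial.map_C]
    congr 2
    simp only [map_mul, map_pow, map_intCast, map_natCast]

theorem stmt_13 (p : ℕ) (hp : p.Prime) (n : ℕ) (hn : 1 ≤ n) :
    (∀ k : ℕ, ∃ a : ℤ, (p : ℚ) ^ (Ip p n) * (Gt p n).coeff k = (a : ℚ)) ∧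
      (∀ x : ℤ, ∃ a : ℤ, (Gt p n).eval (x : ℚ) = (a : ℚ)) := by
  constructor
  · intro k
    obtain ⟨q, hq⟩ := Gt_coeff_int p hp n
    refine ⟨q.coeff k, ?_⟩
    have := congrArg (fun r => r.coeff k) hq
    simp only [coeff_C_mul, coeff_map] at this
    simpa using this
  · exact Gt_eval_int p hp n
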